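/- Let R be a commutative ring and z₁, …, z_k ∈ R a sequence of elements such that every permutation of (z₁,…,z_k) is a regular sequence. Set w = z₁⋯z_k and, for each i, w_i = ∏_{j≠i} z_j. Since each w_i divides w, there are canonical R-algebra maps Localization.Away w_i → Localization.Away w; let N ⊆ Localization.Away w be the R-submodule generated by the union of their images. Then for r ∈ R the element r·(1/w) lies in N if and only if r belongs to the ideal (z₁,…,z_k); consequently the R-submodule of (Localization.Away w)/N generated by the class of 1/w is isomorphic to R/(z₁,…,z_k) as an R-module, and it is nonzero whenever (z₁,…,z_k) is a proper ideal. (Lemma 2.3, part 2: the annihilator of the class of (z₁⋯z_k)^{-1} in the top Čech cohomology H^k(C(R, z)) is (z₁,…,z_k).) -/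

import Mathlib

/-- A sequence `z : Fin k → R` is regular if each `z i` is a non-zero-divisor modulo the
ideal generated by the previous elements. -/
def IsRegSeq {R : Type*} [CommRing R] {k : ℕ} (z : Fin k → R) : Prop :=
  ∀ i : Fin k, ∀ x : R,
    z i * x ∈ Ideal.span {y | ∃ j : Fin k, j < i ∧ z j = y} →
      x ∈ Ideal.span {y | ∃ j : Fin k, j < i ∧ z j = y}

/-- The canonical map `R[w_i⁻¹] → R[w⁻¹]`, where `w = ∏ⱼ zⱼ` and `w_i = ∏_{j≠i} zⱼ`,
induced by the divisibility `w_i ∣ w`. -/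
noncomputable def awayPartialMap {R : Type*} [CommRing R] {k : ℕ} (z : Fin k → R)
    (i : Fin k) :
    Localization.Away (∏ j ∈ Finset.univ.erase i, z j) →+* Localization.Away (∏ j, z j) :=
  Localization.awayLift (algebraMap R (Localization.Away (∏ j, z j)))
    (∏ j ∈ Finset.univ.erase i, z j)
    (by
      have h : (∏ j ∈ Finset.univ.erase i, z j) * z i = ∏ j, z j :=
        Finset.prod_erase_mul _ _ (Finset.mem_univ i)
      have hu : IsUnit (algebraMap R (Localization.Away (∏ j, z j))
          (∏ j ∈ Finset.univ.erase i, z j) *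
          algebraMap R (Localization.Away (∏ j, z j)) (z i)) := by
        rw [← map_mul, h]
        exact IsLocalization.Away.algebraMap_isUnit _
      exact isUnit_of_mul_isUnit_left hu)

section Aux

variable {R : Type*} [CommRing R] {k : ℕ} {z : Fin k → R}

def zIdeal (z : Fin k → R) (S : Finset (Fin k)) (a : Fin k → ℕ) : Ideal R :=
  Ideal.span ((fun j => z j ^ a j) '' ↑S)

lemma mem_zIdeal_iff {S : Finset (Fin k)} {a : Fin k → ℕ} {x : R} :
    x ∈ zIdeal z S a ↔ ∃ c : Fin k → R, x = ∑ j ∈ S, c j * z j ^ a j := by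
  constructor
  · intro hx
    induction hx using Submodule.span_induction with
    | mem y hy =>
      obtain ⟨j0, hj0, rfl⟩ := hy
      refine ⟨fun j => if j = j0 then 1 else 0, ?_⟩
      simp only [ite_mul, one_mul, zero_mul]
      rw [Finset.sum_ite_eq' S j0 (fun j => z j ^ a j)]
      simp_all
    | zero => exact ⟨0, by simp⟩
    | add x y _ _ hx hy =>
      obtain ⟨c, rfl⟩ := hx; obtain ⟨d, rfl⟩ := hy
      exact ⟨c + d, by simp [add_mul, Finset.sum_add_distrib]⟩
    | smul r x _ hx =>
      obtain ⟨c, rfl⟩ := hx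
      exact ⟨fun j => r * c j, by simp [Finset.mul_sum, mul_assoc, smul_eq_mul]⟩
  · rintro ⟨c, rfl⟩
    exact Ideal.sum_mem _ fun j hj => Ideal.mul_mem_left _ _
      (Ideal.subset_span ⟨j, by simpa using hj, rfl⟩)

variable (z) in
lemma exists_perm (S : Finset (Fin k)) (i : Fin k) (hi : i ∉ S) :
    ∃ (σ : Equiv.Perm (Fin k)) (hm : S.card < k),
      σ ⟨S.card, hm⟩ = i ∧ (∀ j : Fin k, (j : ℕ) < S.card → σ j ∈ S) ∧
        (∀ s ∈ S, ∃ j : Fin k, (j : ℕ) < S.card ∧ σ j = s) := by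
  classical
  set m := S.card with hmdef
  have hcard : m + 1 ≤ k := by
    have h1 : (insert i S).card = m + 1 := Finset.card_insert_of_notMem hi
    have := Finset.card_le_univ (insert i S)
    simpa [h1] using this
  have hm : m < k := hcard
  set C : Finset (Fin k) := (insert i S)ᶜ with hCdef
  have hCcard : C.card = k - (m + 1) := by
    rw [hCdef, Finset.card_compl, Finset.card_insert_of_notMem hi]
    simp [hmdef]
  let e : Fin m ↪o Fin k := S.orderEmbOfFin rfl
  let f : Fin (k - (m + 1)) ↪o Fin k := C.orderEmbOfFin hCcard
  have he : ∀ t, e t ∈ S := fun t => S.orderEmbOfFin_mem rfl t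
  have hf : ∀ t, f t ∈ C := fun t => C.orderEmbOfFin_mem hCcard t
  let g : Fin k → Fin k := fun j =>
    if h : (j : ℕ) < m then e ⟨j, h⟩
    else if h2 : (j : ℕ) = m then i
    else f ⟨(j : ℕ) - (m + 1), by have := j.2; omega⟩
  have hgS : ∀ j : Fin k, (h : (j : ℕ) < m) → g j = e ⟨j, h⟩ := by
    intro j h; simp only [g, dif_pos h]
  have hgi : ∀ j : Fin k, (j : ℕ) = m → g j = i := by
    intro j h; simp only [g]; rw [dif_neg (by omega), dif_pos h]
  have hgC : ∀ j : Fin k, (h : m < (j : ℕ)) → g j = f ⟨(j : ℕ) - (m + 1), by have := j.2; omega⟩ := by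
    intro j h; simp only [g]; rw [dif_neg (by omega), dif_neg (by omega)]
  have hinj : Function.Injective g := by
    intro j1 j2 hg
    have h1 := j1.isLt
    have h2 := j2.isLt
    rcases lt_trichotomy (j1 : ℕ) m with c1 | c1 | c1 <;>
      rcases lt_trichotomy (j2 : ℕ) m with c2 | c2 | c2
    · rw [hgS j1 c1, hgS j2 c2] at hg
      have := e.injective hg
      exact Fin.ext (congrArg Fin.val this : _)
    · rw [hgS j1 c1, hgi j2 c2] at hg
      exact absurd (hg ▸ he _) hi
    · rw [hgS j1 c1, hgC j2 c2] at hg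
      have : e ⟨j1, c1⟩ ∈ C := hg ▸ hf _
      exact absurd (Finset.mem_insert_of_mem (he _)) (Finset.mem_compl.mp this)
    · rw [hgi j1 c1, hgS j2 c2] at hg
      exact absurd (hg ▸ he _) (hg ▸ hi)
    · exact Fin.ext (c1.trans c2.symm)
    · rw [hgi j1 c1, hgC j2 c2] at hg
      have : i ∈ C := hg ▸ hf _
      exact absurd (Finset.mem_insert_self i S) (Finset.mem_compl.mp this)
    · rw [hgC j1 c1, hgS j2 c2] at hg
      have : e ⟨j2, c2⟩ ∈ C := hg ▸ hf _
      exact absurd (Finset.mem_insert_of_mem (he _)) (Finset.mem_compl.mp this)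
    · rw [hgC j1 c1, hgi j2 c2] at hg
      have : i ∈ C := hg ▸ hf _
      exact absurd (Finset.mem_insert_self i S) (Finset.mem_compl.mp this)
    · rw [hgC j1 c1, hgC j2 c2] at hg
      have := f.injective hg
      have : (j1 : ℕ) - (m + 1) = (j2 : ℕ) - (m + 1) := congrArg Fin.val this
      exact Fin.ext (by omega)
  let σ : Equiv.Perm (Fin k) := Equiv.ofBijective g (Finite.injective_iff_bijective.mp hinj)
  refine ⟨σ, hm, hgi ⟨m, hm⟩ rfl, fun j hj => by have hh : σ j = e ⟨(j:ℕ), hj⟩ := hgS j hj; rw [hh]; exact he _, fun s hs => ?_⟩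
  have : s ∈ Set.range e := by rw [Finset.range_orderEmbOfFin]; exact hs
  obtain ⟨t, ht⟩ := this
  exact ⟨⟨t, t.isLt.trans hm⟩, t.isLt, by rw [show σ _ = g _ from rfl, hgS _ t.isLt]; simpa using ht⟩

lemma base_nzd (hreg : ∀ σ : Equiv.Perm (Fin k), IsRegSeq (z ∘ σ))
    (S : Finset (Fin k)) (i : Fin k) (hi : i ∉ S) (x : R)
    (hx : z i * x ∈ Ideal.span (z '' ↑S)) : x ∈ Ideal.span (z '' ↑S) := by
  obtain ⟨σ, hm, hσi, hσS, hσS'⟩ := exists_perm S i hi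
  have hset : {y | ∃ j : Fin k, j < ⟨S.card, hm⟩ ∧ (z ∘ σ) j = y} = z '' ↑S := by
    ext y
    constructor
    · rintro ⟨j, hj, rfl⟩
      exact ⟨σ j, hσS j hj, rfl⟩
    · rintro ⟨s, hs, rfl⟩
      obtain ⟨j, hj, rfl⟩ := hσS' s hs
      exact ⟨j, hj, rfl⟩
  have := hreg σ ⟨S.card, hm⟩ x (by rw [hset]; simpa [Function.comp, hσi] using hx)
  rwa [hset] at this

lemma base_nzd' (hreg : ∀ σ : Equiv.Perm (Fin k), IsRegSeq (z ∘ σ))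
    (S : Finset (Fin k)) (a : Fin k → ℕ) (ha : ∀ j ∈ S, a j = 1)
    (i : Fin k) (hi : i ∉ S) (x : R)
    (hx : z i * x ∈ zIdeal z S a) : x ∈ zIdeal z S a := by
  have hset : (fun j => z j ^ a j) '' ↑S = z '' ↑S := by
    apply Set.image_congr
    intro j hj; rw [ha j hj, pow_one]
  unfold zIdeal at hx ⊢
  rw [hset] at hx ⊢
  exact base_nzd hreg S i hi x hx


/-- Main non-zero-divisor lemma for powers. -/
lemma main_nzd (hreg : ∀ σ : Equiv.Perm (Fin k), IsRegSeq (z ∘ σ)) :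
    ∀ (n : ℕ) (S : Finset (Fin k)) (a : Fin k → ℕ), (∀ j ∈ S, 1 ≤ a j) →
      (∑ j ∈ S, (a j - 1)) ≤ n → ∀ i ∉ S, ∀ x : R,
      z i * x ∈ zIdeal z S a → x ∈ zIdeal z S a := by
  intro n
  induction n with
  | zero =>
    intro S a ha hsum i hi x hx
    refine base_nzd' hreg S a (fun j hj => ?_) i hi x hx
    have := Finset.sum_eq_zero_iff.mp (Nat.le_zero.mp hsum) j hj
    have := ha j hj
    omega
  | succ n ih =>
    intro S a ha hsum i hi x hx
    by_cases hone : ∀ j ∈ S, a j = 1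
    · exact base_nzd' hreg S a hone i hi x hx
    push_neg at hone
    obtain ⟨j0, hj0S, hj0⟩ := hone
    have ha0 : 2 ≤ a j0 := by have := ha j0 hj0S; omega
    classical
    have hne : ∀ j ∈ S.erase j0, j ≠ j0 := fun j hj => Finset.ne_of_mem_erase hj
    have hsum_split : (a j0 - 1) + ∑ j ∈ S.erase j0, (a j - 1) = ∑ j ∈ S, (a j - 1) :=
      Finset.add_sum_erase S (fun j => a j - 1) hj0S
    have hpow : z j0 * z j0 ^ (a j0 - 1) = z j0 ^ a j0 := by
      rw [← pow_succ']; congr 1; omega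
    -- exponent functions
    set a' : Fin k → ℕ := Function.update a j0 1 with ha'
    set a'' : Fin k → ℕ := Function.update a j0 (a j0 - 1) with ha''
    have ha'j : ∀ j, j ≠ j0 → a' j = a j := fun j h => Function.update_of_ne h _ _
    have ha''j : ∀ j, j ≠ j0 → a'' j = a j := fun j h => Function.update_of_ne h _ _
    have ha'j0 : a' j0 = 1 := Function.update_self _ _ _
    have ha''j0 : a'' j0 = a j0 - 1 := Function.update_self _ _ _
    have ha'le : ∀ j ∈ S, 1 ≤ a' j := by
      intro j hj
      by_cases h : j = j0
      · subst h; omega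
      · rw [ha'j j h]; exact ha j hj
    have ha''le : ∀ j ∈ S, 1 ≤ a'' j := by
      intro j hj
      by_cases h : j = j0
      · subst h; omega
      · rw [ha''j j h]; exact ha j hj
    have hsum'split : (a' j0 - 1) + ∑ j ∈ S.erase j0, (a' j - 1) = ∑ j ∈ S, (a' j - 1) :=
      Finset.add_sum_erase S (fun j => a' j - 1) hj0S
    have hsum''split : (a'' j0 - 1) + ∑ j ∈ S.erase j0, (a'' j - 1) = ∑ j ∈ S, (a'' j - 1) :=
      Finset.add_sum_erase S (fun j => a'' j - 1) hj0S
    have herase' : ∑ j ∈ S.erase j0, (a' j - 1) = ∑ j ∈ S.erase j0, (a j - 1) :=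
      Finset.sum_congr rfl fun j hj => by rw [ha'j j (hne j hj)]
    have herase'' : ∑ j ∈ S.erase j0, (a'' j - 1) = ∑ j ∈ S.erase j0, (a j - 1) :=
      Finset.sum_congr rfl fun j hj => by rw [ha''j j (hne j hj)]
    have hsum' : (∑ j ∈ S, (a' j - 1)) ≤ n := by omega
    have hsum'' : (∑ j ∈ S, (a'' j - 1)) ≤ n := by omega
    have hsum_erase : (∑ j ∈ S.erase j0, (a j - 1)) ≤ n := by omega
    -- Step 1: z i * x ∈ zIdeal S a'
    have hx' : z i * x ∈ zIdeal z S a' := by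
      obtain ⟨c, hc⟩ := mem_zIdeal_iff.mp hx
      refine mem_zIdeal_iff.mpr ⟨fun j => if j = j0 then c j0 * z j0 ^ (a j0 - 1) else c j, ?_⟩
      rw [hc]
      refine Finset.sum_congr rfl fun j hj => ?_
      by_cases h : j = j0
      · simp only [if_pos h]; subst h; rw [ha'j0, pow_one, ← hpow]; ring
      · simp only [if_neg h]; rw [ha'j j h]
    have hxa' : x ∈ zIdeal z S a' := ih S a' ha'le hsum' i hi x hx'
    -- x = z j0 * u + v
    obtain ⟨d, hd⟩ := mem_zIdeal_iff.mp hxa'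
    set u : R := d j0 with hu
    set v : R := ∑ j ∈ S.erase j0, d j * z j ^ a j with hv
    have hxuv : x = z j0 * u + v := by
      rw [hd, ← Finset.add_sum_erase S (fun j => d j * z j ^ a' j) hj0S, ha'j0, pow_one, hv]
      have : ∑ j ∈ S.erase j0, d j * z j ^ a' j = ∑ j ∈ S.erase j0, d j * z j ^ a j :=
        Finset.sum_congr rfl fun j hj => by rw [ha'j j (hne j hj)]
      rw [this]; ring
    have hvmem : v ∈ zIdeal z (S.erase j0) a := mem_zIdeal_iff.mpr ⟨d, rfl⟩
    -- z i * (z j0 * u) ∈ zIdeal S a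
    have hzu : z i * (z j0 * u) ∈ zIdeal z S a := by
      have h1 : z i * (z j0 * u) = z i * x - z i * v := by rw [hxuv]; ring
      rw [h1]
      refine Submodule.sub_mem _ hx (Ideal.mul_mem_left _ _ ?_)
      refine Ideal.span_mono (Set.image_mono ?_) hvmem
      exact_mod_cast Finset.erase_subset _ _
    -- decompose
    obtain ⟨e, he⟩ := mem_zIdeal_iff.mp hzu
    have he2 : z j0 * (z i * u - e j0 * z j0 ^ (a j0 - 1)) ∈ zIdeal z (S.erase j0) a := by
      refine mem_zIdeal_iff.mpr ⟨e, ?_⟩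
      have h2 : z j0 * (z i * u - e j0 * z j0 ^ (a j0 - 1)) =
          z i * (z j0 * u) - e j0 * z j0 ^ (a j0) := by rw [← hpow]; ring
      rw [h2, he, ← Finset.add_sum_erase S (fun j => e j * z j ^ a j) hj0S]
      ring
    have he3 : z i * u - e j0 * z j0 ^ (a j0 - 1) ∈ zIdeal z (S.erase j0) a :=
      ih (S.erase j0) a (fun j hj => ha j (Finset.mem_of_mem_erase hj)) hsum_erase
        j0 (Finset.notMem_erase _ _) _ he2
    -- z i * u ∈ zIdeal S a''
    have hzu' : z i * u ∈ zIdeal z S a'' := by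
      obtain ⟨q, hq⟩ := mem_zIdeal_iff.mp he3
      refine mem_zIdeal_iff.mpr ⟨fun j => if j = j0 then e j0 else q j, ?_⟩
      have h3 : z i * u = (z i * u - e j0 * z j0 ^ (a j0 - 1)) + e j0 * z j0 ^ (a j0 - 1) := by
        ring
      rw [h3, hq,
        ← Finset.add_sum_erase S (fun j => (if j = j0 then e j0 else q j) * z j ^ a'' j) hj0S]
      simp only [eq_self_iff_true, if_true]
      rw [ha''j0]
      have : ∑ j ∈ S.erase j0, (if j = j0 then e j0 else q j) * z j ^ a'' j
          = ∑ j ∈ S.erase j0, q j * z j ^ a j :=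
        Finset.sum_congr rfl fun j hj => by
          simp only [if_neg (hne j hj)]; rw [ha''j j (hne j hj)]
      rw [this]; ring
    have hua'' : u ∈ zIdeal z S a'' := ih S a'' ha''le hsum'' i hi u hzu'
    -- conclude x ∈ zIdeal S a
    obtain ⟨f, hfu⟩ := mem_zIdeal_iff.mp hua''
    refine mem_zIdeal_iff.mpr ⟨fun j => if j = j0 then f j0 else (z j0 * f j + d j), ?_⟩
    rw [hxuv, hfu, hv,
      ← Finset.add_sum_erase S
        (fun j => (if j = j0 then f j0 else (z j0 * f j + d j)) * z j ^ a j) hj0S,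
      ← Finset.add_sum_erase S (fun j => f j * z j ^ a'' j) hj0S]
    simp only [eq_self_iff_true, if_true]
    rw [ha''j0]
    have h4 : ∑ j ∈ S.erase j0, (if j = j0 then f j0 else (z j0 * f j + d j)) * z j ^ a j
        = ∑ j ∈ S.erase j0, (z j0 * (f j * z j ^ a'' j) + d j * z j ^ a j) :=
      Finset.sum_congr rfl fun j hj => by
        simp only [if_neg (hne j hj)]; rw [ha''j j (hne j hj)]; ring
    rw [h4, Finset.sum_add_distrib, ← Finset.mul_sum, ← hpow]
    ring

/-- Colon lemma: dividing by `z i` decreases the exponent by one. -/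
lemma colon_lemma (hreg : ∀ σ : Equiv.Perm (Fin k), IsRegSeq (z ∘ σ))
    (S : Finset (Fin k)) (a : Fin k → ℕ) (ha : ∀ j ∈ S, 1 ≤ a j)
    (i : Fin k) (hiS : i ∈ S) (hai : 2 ≤ a i) (y : R)
    (hy : z i * y ∈ zIdeal z S a) :
    y ∈ zIdeal z S (Function.update a i (a i - 1)) := by
  classical
  have hne : ∀ j ∈ S.erase i, j ≠ i := fun j hj => Finset.ne_of_mem_erase hj
  have hpow : z i * z i ^ (a i - 1) = z i ^ a i := by
    rw [← pow_succ']; congr 1; omega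
  obtain ⟨c, hc⟩ := mem_zIdeal_iff.mp hy
  have h2 : z i * (y - c i * z i ^ (a i - 1)) ∈ zIdeal z (S.erase i) a := by
    refine mem_zIdeal_iff.mpr ⟨c, ?_⟩
    have : z i * (y - c i * z i ^ (a i - 1)) = z i * y - c i * z i ^ a i := by
      rw [← hpow]; ring
    rw [this, hc, ← Finset.add_sum_erase S (fun j => c j * z j ^ a j) hiS]
    ring
  have h3 : y - c i * z i ^ (a i - 1) ∈ zIdeal z (S.erase i) a :=
    main_nzd hreg _ (S.erase i) a (fun j hj => ha j (Finset.mem_of_mem_erase hj))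
      le_rfl i (Finset.notMem_erase _ _) _ h2
  obtain ⟨q, hq⟩ := mem_zIdeal_iff.mp h3
  refine mem_zIdeal_iff.mpr ⟨fun j => if j = i then c i else q j, ?_⟩
  have h4 : y = (y - c i * z i ^ (a i - 1)) + c i * z i ^ (a i - 1) := by ring
  rw [h4, hq,
    ← Finset.add_sum_erase S
      (fun j => (if j = i then c i else q j) * z j ^ (Function.update a i (a i - 1)) j) hiS]
  simp only [eq_self_iff_true, if_true, Function.update_self]
  have : ∑ j ∈ S.erase i,
      (if j = i then c i else q j) * z j ^ (Function.update a i (a i - 1)) j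
      = ∑ j ∈ S.erase i, q j * z j ^ a j :=
    Finset.sum_congr rfl fun j hj => by
      simp only [if_neg (hne j hj)]; rw [Function.update_of_ne (hne j hj)]
  rw [this]; ring

/-- Dividing by a partial product of the `z j` (one at a time). -/
lemma div_prod (hreg : ∀ σ : Equiv.Perm (Fin k), IsRegSeq (z ∘ σ)) (N : ℕ) (hN : 2 ≤ N) :
    ∀ (s : Finset (Fin k)) (y : R),
      (∏ j ∈ s, z j) * y ∈ zIdeal z Finset.univ (fun j => if j ∈ s then N else N - 1) →
      y ∈ zIdeal z Finset.univ (fun _ => N - 1) := by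
  classical
  intro s
  induction s using Finset.induction with
  | empty => intro y hy; simpa using hy
  | @insert i s his ih =>
    intro y hy
    rw [Finset.prod_insert his, mul_assoc] at hy
    have h1 : (∏ j ∈ s, z j) * y ∈ zIdeal z Finset.univ
        (Function.update (fun j => if j ∈ insert i s then N else N - 1) i
          ((if i ∈ insert i s then N else N - 1) - 1)) := by
      refine colon_lemma hreg Finset.univ _ (fun j _ => by split <;> omega) i
        (Finset.mem_univ i) (by simp [Finset.mem_insert_self]; omega) _ hy
    have heq : Function.update (fun j => if j ∈ insert i s then N else N - 1) i
          ((if i ∈ insert i s then N else N - 1) - 1)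
        = fun j => if j ∈ s then N else N - 1 := by
      funext j
      by_cases h : j = i
      · subst h
        rw [Function.update_self, if_pos (Finset.mem_insert_self _ _), if_neg his]
      · rw [Function.update_of_ne h]
        by_cases h2 : j ∈ s
        · rw [if_pos (Finset.mem_insert_of_mem h2), if_pos h2]
        · rw [if_neg (by simp [h, h2]), if_neg h2]
    rw [heq] at h1
    exact ih y h1

/-- Main division lemma. -/
lemma main_div (hreg : ∀ σ : Equiv.Perm (Fin k), IsRegSeq (z ∘ σ)) :
    ∀ (t N : ℕ) (r : R), t + 1 ≤ N →
      (∏ j, z j) ^ t * r ∈ zIdeal z Finset.univ (fun _ => N) →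
      r ∈ Ideal.span (Set.range z) := by
  intro t
  induction t with
  | zero =>
    intro N r hN hr
    simp only [pow_zero, one_mul] at hr
    obtain ⟨c, hc⟩ := mem_zIdeal_iff.mp hr
    rw [hc]
    refine Ideal.sum_mem _ fun j hj => ?_
    have : z j ^ N = z j ^ (N - 1) * z j := by rw [← pow_succ]; congr 1; omega
    rw [this, ← mul_assoc]
    exact Ideal.mul_mem_left _ _ (Ideal.subset_span ⟨j, rfl⟩)
  | succ t ih =>
    intro N r hN hr
    have h1 : (∏ j, z j) * ((∏ j, z j) ^ t * r) ∈ zIdeal z Finset.univ (fun _ => N) := by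
      rw [← mul_assoc, ← pow_succ']
      exact hr
    have h2 : (∏ j, z j) ^ t * r ∈ zIdeal z Finset.univ (fun _ => N - 1) := by
      refine div_prod hreg N (by omega) Finset.univ _ ?_
      simpa using h1
    exact ih (N - 1) r (by omega) h2

lemma zIdeal_mul_pow (n m : ℕ) (b : R) (hb : b ∈ zIdeal z Finset.univ (fun _ => n)) :
    b * (∏ j, z j) ^ m ∈ zIdeal z Finset.univ (fun _ => n + m) := by
  obtain ⟨c, hc⟩ := mem_zIdeal_iff.mp hb
  refine mem_zIdeal_iff.mpr ⟨fun j => c j * (∏ l ∈ Finset.univ.erase j, z l) ^ m, ?_⟩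
  rw [hc, Finset.sum_mul]
  refine Finset.sum_congr rfl fun j _ => ?_
  have : (∏ l, z l) ^ m = (∏ l ∈ Finset.univ.erase j, z l) ^ m * z j ^ m := by
    rw [← mul_pow, Finset.prod_erase_mul _ _ (Finset.mem_univ j)]
  rw [this, pow_add]; ring

end Aux

section LocAux

variable {R : Type*} [CommRing R] {k : ℕ}

variable (z : Fin k → R)

local notation "w" => ∏ j, z j
local notation "AW" => Localization.Away (∏ j, z j)
local notation "aM" => algebraMap R (Localization.Away (∏ j, z j))
local notation "ι" => IsLocalization.Away.invSelf (S := Localization.Away (∏ j, z j)) (∏ j, z j)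

lemma prod_erase_mul' (i : Fin k) : (∏ j ∈ Finset.univ.erase i, z j) * z i = w :=
  Finset.prod_erase_mul _ _ (Finset.mem_univ i)

lemma awayPartialMap_algebraMap (i : Fin k) (x : R) :
    awayPartialMap z i (algebraMap R (Localization.Away (∏ j ∈ Finset.univ.erase i, z j)) x)
      = aM x := by
  have h' : IsUnit (aM (∏ j ∈ Finset.univ.erase i, z j)) := by
    refine isUnit_of_mul_isUnit_left (y := aM (z i)) ?_
    rw [← map_mul, prod_erase_mul' z i]
    exact IsLocalization.Away.algebraMap_isUnit _
  exact IsLocalization.Away.lift_eq _ h' x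

lemma mul_invSelf' : aM w * ι = 1 := IsLocalization.Away.mul_invSelf _

/-- `z i / w` is in the image of the partial away map. -/
lemma zdivw_mem_range (i : Fin k) : aM (z i) * ι ∈ Set.range (awayPartialMap z i) := by
  have hv : aM (∏ j ∈ Finset.univ.erase i, z j) * (aM (z i) * ι) = 1 := by
    rw [← mul_assoc, ← map_mul, prod_erase_mul' z i, mul_invSelf']
  refine ⟨Localization.mk 1 ⟨(∏ j ∈ Finset.univ.erase i, z j) ^ 1, 1, rfl⟩, ?_⟩
  have := Localization.awayLift_mk (A := AW) aM (∏ j ∈ Finset.univ.erase i, z j)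
    1 (aM (z i) * ι) hv 1
  rw [show awayPartialMap z i = Localization.awayLift aM (∏ j ∈ Finset.univ.erase i, z j)
    (isUnit_iff_exists_inv.mpr ⟨aM (z i) * ι, hv⟩) from rfl]
  rw [this, map_one, one_mul, pow_one]

/-- key property P propagated over the span N -/
lemma span_range_property (x : Localization.Away (∏ j, z j))
    (hx : x ∈ Submodule.span R (⋃ i, Set.range (awayPartialMap z i))) :
    ∃ (n : ℕ) (b : R), b ∈ zIdeal z Finset.univ (fun _ => n) ∧
      x * aM (w ^ n) = aM b := by
  have bump : ∀ (n m : ℕ) (b : R), b ∈ zIdeal z Finset.univ (fun _ => n) →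
      b * w ^ m ∈ zIdeal z Finset.univ (fun _ => n + m) := by
    intro n m b hb
    obtain ⟨c, hc⟩ := mem_zIdeal_iff.mp hb
    refine mem_zIdeal_iff.mpr ⟨fun j => c j * (∏ l ∈ Finset.univ.erase j, z l) ^ m, ?_⟩
    rw [hc, Finset.sum_mul]
    refine Finset.sum_congr rfl fun j _ => ?_
    have : w ^ m = (∏ l ∈ Finset.univ.erase j, z l) ^ m * z j ^ m := by
      rw [← mul_pow, prod_erase_mul' z j]
    rw [this, pow_add]; ring
  induction hx using Submodule.span_induction with
  | mem y hy =>
    obtain ⟨s, ⟨i, rfl⟩, hy⟩ := hy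
    obtain ⟨u, rfl⟩ := hy
    obtain ⟨⟨a, m⟩, hm⟩ := IsLocalization.surj (M := Submonoid.powers (∏ j ∈ Finset.univ.erase i, z j)) u
    obtain ⟨n, hn⟩ := m.2
    refine ⟨n, a * z i ^ n, ?_, ?_⟩
    · exact Ideal.mul_mem_left _ _ (Ideal.subset_span ⟨i, Finset.mem_coe.mpr (Finset.mem_univ i), rfl⟩)
    · have happ := congrArg (awayPartialMap z i) hm
      rw [map_mul, awayPartialMap_algebraMap, awayPartialMap_algebraMap] at happ
      have hm2 : (m : R) = (∏ j ∈ Finset.univ.erase i, z j) ^ n := hn.symm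
      rw [hm2] at happ
      calc awayPartialMap z i u * aM (w ^ n)
          = awayPartialMap z i u * aM ((∏ j ∈ Finset.univ.erase i, z j) ^ n * z i ^ n) := by
            rw [← mul_pow, prod_erase_mul' z i]
        _ = awayPartialMap z i u * aM ((∏ j ∈ Finset.univ.erase i, z j) ^ n) * aM (z i ^ n) := by
            rw [map_mul, mul_assoc]
        _ = aM a * aM (z i ^ n) := by rw [happ]
        _ = aM (a * z i ^ n) := by rw [map_mul]
  | zero => exact ⟨0, 0, Submodule.zero_mem _, by simp⟩
  | add x y _ _ hx hy =>
    obtain ⟨n1, b1, hb1, he1⟩ := hx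
    obtain ⟨n2, b2, hb2, he2⟩ := hy
    refine ⟨n1 + n2, b1 * w ^ n2 + b2 * w ^ n1, ?_, ?_⟩
    · exact Submodule.add_mem _ (bump n1 n2 b1 hb1)
        (by rw [show n1 + n2 = n2 + n1 by omega]; exact bump n2 n1 b2 hb2)
    · rw [map_add, map_mul, map_mul, ← he1, ← he2, pow_add, map_mul]
      ring
  | smul r x _ hx =>
    obtain ⟨n, b, hb, he⟩ := hx
    refine ⟨n, r * b, Ideal.mul_mem_left _ _ hb, ?_⟩
    rw [map_mul, Algebra.smul_def, mul_assoc, he]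

end LocAux

/-- **Lemma 2.3, part 2.** Let `z₁,…,z_k ∈ R` be such that every permutation of them is a
regular sequence, `w = z₁⋯z_k`, `w_i = ∏_{j≠i} z_j`, and let `N ⊆ R[w⁻¹]` be the
`R`-submodule generated by the images of the canonical maps `R[w_i⁻¹] → R[w⁻¹]`. Then
`r·(1/w) ∈ N` iff `r ∈ (z₁,…,z_k)`; consequently the `R`-submodule of `R[w⁻¹]/N` generated
by the class of `1/w` is isomorphic to `R/(z₁,…,z_k)`, and it is nonzero whenever
`(z₁,…,z_k)` is a proper ideal. -/
theorem stmt5 {R : Type*} [CommRing R] {k : ℕ} (z : Fin k → R)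
    (hreg : ∀ σ : Equiv.Perm (Fin k), IsRegSeq (z ∘ σ))
    (N : Submodule R (Localization.Away (∏ j, z j)))
    (hN : N = Submodule.span R (⋃ i, Set.range (awayPartialMap z i))) :
    (∀ r : R,
      algebraMap R (Localization.Away (∏ j, z j)) r *
          IsLocalization.Away.invSelf (S := Localization.Away (∏ j, z j)) (∏ j, z j) ∈ N ↔
        r ∈ Ideal.span (Set.range z)) ∧
    Nonempty
      ((Submodule.span R
          {(Submodule.Quotient.mk
            (IsLocalization.Away.invSelf (S := Localization.Away (∏ j, z j)) (∏ j, z j)) :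
              Localization.Away (∏ j, z j) ⧸ N)}) ≃ₗ[R] (R ⧸ Ideal.span (Set.range z))) ∧
    (Ideal.span (Set.range z) ≠ ⊤ →
      Submodule.span R
          {(Submodule.Quotient.mk
            (IsLocalization.Away.invSelf (S := Localization.Away (∏ j, z j)) (∏ j, z j)) :
              Localization.Away (∏ j, z j) ⧸ N)} ≠ ⊥) := by
  classical
  have part1 : ∀ r : R,
      algebraMap R (Localization.Away (∏ j, z j)) r *
          IsLocalization.Away.invSelf (S := Localization.Away (∏ j, z j)) (∏ j, z j) ∈ N ↔
        r ∈ Ideal.span (Set.range z) := by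
    intro r
    constructor
    · intro hr
      rw [hN] at hr
      obtain ⟨n, b, hb, he⟩ := span_range_property z _ hr
      have hι : IsLocalization.Away.invSelf (S := Localization.Away (∏ j, z j)) (∏ j, z j) *
          algebraMap R (Localization.Away (∏ j, z j)) (∏ j, z j) = 1 := by
        rw [mul_comm]; exact IsLocalization.Away.mul_invSelf _
      have he2 : algebraMap R (Localization.Away (∏ j, z j)) (r * (∏ j, z j) ^ n)
          = algebraMap R (Localization.Away (∏ j, z j)) (b * (∏ j, z j)) := by
        have lhs : algebraMap R (Localization.Away (∏ j, z j)) (r * (∏ j, z j) ^ n)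
            = (algebraMap R (Localization.Away (∏ j, z j)) r *
                IsLocalization.Away.invSelf (S := Localization.Away (∏ j, z j)) (∏ j, z j)) *
              algebraMap R (Localization.Away (∏ j, z j)) ((∏ j, z j) ^ (n + 1)) := by
          rw [pow_succ, map_mul, map_mul]
          linear_combination (-(algebraMap R (Localization.Away (∏ j, z j)) r *
            algebraMap R (Localization.Away (∏ j, z j)) ((∏ j, z j) ^ n))) * hι
        rw [lhs, pow_succ, map_mul, ← mul_assoc, he, ← map_mul]
      obtain ⟨c, hc⟩ := (IsLocalization.eq_iff_exists (Submonoid.powers (∏ j, z j))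
        (Localization.Away (∏ j, z j))).mp he2
      obtain ⟨m, hm⟩ := c.2
      rw [← hm] at hc
      have key : (∏ j, z j) ^ (m + n) * r = b * (∏ j, z j) ^ (m + 1) := by
        have : (∏ j, z j) ^ m * (r * (∏ j, z j) ^ n)
            = (∏ j, z j) ^ m * (b * (∏ j, z j)) := hc
        rw [pow_add, pow_succ]
        linear_combination this
      have hmem : b * (∏ j, z j) ^ (m + 1) ∈ zIdeal z Finset.univ (fun _ => n + (m + 1)) :=
        zIdeal_mul_pow n (m + 1) b hb
      rw [← key] at hmem
      exact main_div hreg (m + n) (n + (m + 1)) r (by omega) hmem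
    · intro hr
      have hr' : r ∈ Submodule.span R (Set.range z) := hr
      obtain ⟨c, hc⟩ := Submodule.mem_span_range_iff_exists_fun R |>.mp hr'
      have heq : algebraMap R (Localization.Away (∏ j, z j)) r *
          IsLocalization.Away.invSelf (S := Localization.Away (∏ j, z j)) (∏ j, z j)
          = ∑ i, c i • (algebraMap R (Localization.Away (∏ j, z j)) (z i) *
              IsLocalization.Away.invSelf (S := Localization.Away (∏ j, z j)) (∏ j, z j)) := by
        rw [← hc, map_sum, Finset.sum_mul]
        refine Finset.sum_congr rfl fun i _ => ?_
        rw [smul_eq_mul, map_mul, Algebra.smul_def, mul_assoc]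
      rw [hN, heq]
      exact Submodule.sum_mem _ fun i _ => Submodule.smul_mem _ _
        (Submodule.subset_span (Set.mem_iUnion.mpr ⟨i, zdivw_mem_range z i⟩))
  refine ⟨part1, ?_, ?_⟩
  · set x0 : Localization.Away (∏ j, z j) ⧸ N :=
      Submodule.Quotient.mk
        (IsLocalization.Away.invSelf (S := Localization.Away (∏ j, z j)) (∏ j, z j)) with hx0
    have hker : LinearMap.ker (LinearMap.toSpanSingleton R _ x0) = Ideal.span (Set.range z) := by
      ext r
      rw [LinearMap.mem_ker, LinearMap.toSpanSingleton_apply, hx0,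
        ← Submodule.Quotient.mk_smul, Submodule.Quotient.mk_eq_zero, Algebra.smul_def]
      exact part1 r
    exact ⟨(LinearEquiv.ofEq _ _ (LinearMap.span_singleton_eq_range R _ x0)).trans
      ((LinearMap.quotKerEquivRange (LinearMap.toSpanSingleton R _ x0)).symm.trans
        (Submodule.quotEquivOfEq _ _ hker))⟩
  · intro htop hbot
    set x0 : Localization.Away (∏ j, z j) ⧸ N :=
      Submodule.Quotient.mk
        (IsLocalization.Away.invSelf (S := Localization.Away (∏ j, z j)) (∏ j, z j)) with hx0
    have hx0mem : x0 ∈ Submodule.span R {x0} := Submodule.mem_span_singleton_self x0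
    rw [hbot, Submodule.mem_bot] at hx0mem
    have hι : IsLocalization.Away.invSelf (S := Localization.Away (∏ j, z j)) (∏ j, z j) ∈ N := by
      rw [← Submodule.Quotient.mk_eq_zero]
      exact hx0mem
    have h1 : (1 : R) ∈ Ideal.span (Set.range z) := by
      rw [← part1 1]
      rw [map_one, one_mul]
      exact hι
    exact htop (Ideal.eq_top_iff_one _ |>.mpr h1)
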